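/- Consider particles with positions $x_i(t) \in \mathbb{R}^2$ and circulations $\Gamma_i(t)$ evolving by $\dot{x}_i = \sum_j K(x_j - x_i)\Gamma_j$ and $\dot{\Gamma}_i = \nu \sum_j f_{ji}\Gamma_j$, where $K$ is the Biot--Savart kernel and the stencil satisfies for all $i$: $\sum_j f_{ij} = 0$, $\sum_j f_{ij}(x_j - x_i) = 0$, and $\sum_j f_{ij}|x_j - x_i|^2 = 4$. Then the angular momentum $I_2(t) = \sum_i \Gamma_i(t)|x_i(t)|^2$ satisfies $\frac{d}{dt} I_2 = 4\nu I_0$, where $I_0 = \sum_i \Gamma_i$. -/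

import Mathlib

open Real

/-- The two-dimensional Biot--Savart kernel. -/
noncomputable def biotSavart (z : ℝ × ℝ) : ℝ × ℝ :=
  if z = 0 then 0
  else (z.2 / (2 * π * (z.1^2 + z.2^2)), -z.1 / (2 * π * (z.1^2 + z.2^2)))

lemma bs_key (a b : ℝ × ℝ) :
    a.1 * (biotSavart (b - a)).1 + a.2 * (biotSavart (b - a)).2
    + (b.1 * (biotSavart (a - b)).1 + b.2 * (biotSavart (a - b)).2) = 0 := by
  by_cases h : b - a = 0
  · have h2 : a - b = 0 := by rw [sub_eq_zero] at h ⊢; exact h.symm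
    simp [biotSavart, h, h2]
  · have h2 : a - b ≠ 0 := fun hh => h (by rw [sub_eq_zero] at hh ⊢; exact hh.symm)
    have hd : (b.1 - a.1)^2 + (b.2 - a.2)^2 ≠ 0 := by
      intro hc
      apply h
      have e1 : b.1 - a.1 = 0 := by nlinarith [sq_nonneg (b.1 - a.1), sq_nonneg (b.2 - a.2)]
      have e2 : b.2 - a.2 = 0 := by nlinarith [sq_nonneg (b.1 - a.1), sq_nonneg (b.2 - a.2)]
      have : b - a = (b.1 - a.1, b.2 - a.2) := rfl
      rw [this, e1, e2]; rfl
    have hd2 : (a.1 - b.1)^2 + (a.2 - b.2)^2 ≠ 0 := by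
      intro hc; apply hd; nlinarith
    simp only [biotSavart, if_neg h, if_neg h2, Prod.fst_sub, Prod.snd_sub]
    field_simp
    ring

/-- The angular momentum `I₂ = ∑ Γ_i |x_i|²` of the coupled
convection–diffusion system satisfies `dI₂/dt = 4 ν I₀` where
`I₀ = ∑ Γ_i`, given moment conditions up to second order. -/
theorem stmt_7 {N : ℕ} (ν : ℝ) (hν : 0 ≤ ν)
    (x : ℝ → Fin N → ℝ × ℝ) (Γ : ℝ → Fin N → ℝ) (f : ℝ → Fin N → Fin N → ℝ)
    (hx : ∀ i t, HasDerivAt (fun s => x s i)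
      (∑ j, Γ t j • biotSavart (x t j - x t i)) t)
    (hΓ : ∀ i t, HasDerivAt (fun s => Γ s i) (ν * ∑ j, f t j i * Γ t j) t)
    (hmom0 : ∀ t i, ∑ j, f t i j = 0)
    (hmom1 : ∀ t i, ∑ j, f t i j • (x t j - x t i) = (0 : ℝ × ℝ))
    (hmom2 : ∀ t i, ∑ j, f t i j *
      (((x t j).1 - (x t i).1)^2 + ((x t j).2 - (x t i).2)^2) = 4) :
    ∀ t, HasDerivAt (fun s => ∑ i, Γ s i * ((x s i).1^2 + (x s i).2^2))
      (4 * ν * ∑ i, Γ t i) t := by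
  intro t
  -- derivative of each coordinate of x
  have hx1 : ∀ i, HasDerivAt (fun s => (x s i).1)
      (∑ j, Γ t j • biotSavart (x t j - x t i)).1 t := fun i =>
    (ContinuousLinearMap.fst ℝ ℝ ℝ).hasFDerivAt.comp_hasDerivAt t (hx i t)
  have hx2 : ∀ i, HasDerivAt (fun s => (x s i).2)
      (∑ j, Γ t j • biotSavart (x t j - x t i)).2 t := fun i =>
    (ContinuousLinearMap.snd ℝ ℝ ℝ).hasFDerivAt.comp_hasDerivAt t (hx i t)
  -- derivative of each term
  have hterm : ∀ i, HasDerivAt (fun s => Γ s i * ((x s i).1^2 + (x s i).2^2))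
      ((ν * ∑ j, f t j i * Γ t j) * ((x t i).1^2 + (x t i).2^2)
        + Γ t i * (2 * (x t i).1 * (∑ j, Γ t j • biotSavart (x t j - x t i)).1
          + 2 * (x t i).2 * (∑ j, Γ t j • biotSavart (x t j - x t i)).2)) t := by
    intro i
    have hq := (((hx1 i).fun_pow 2).fun_add ((hx2 i).fun_pow 2))
    have h := (hΓ i t).fun_mul hq
    convert h using 1
    · rfl
    · rfl
    push_cast
    ring
  have H := HasDerivAt.fun_sum (fun i (_ : i ∈ Finset.univ) => hterm i)
  have hEq : ∑ i, ((ν * ∑ j, f t j i * Γ t j) * ((x t i).1^2 + (x t i).2^2)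
        + Γ t i * (2 * (x t i).1 * (∑ j, Γ t j • biotSavart (x t j - x t i)).1
          + 2 * (x t i).2 * (∑ j, Γ t j • biotSavart (x t j - x t i)).2))
      = 4 * ν * ∑ i, Γ t i := by
    rw [Finset.sum_add_distrib]
    -- the diffusion part
    have hcol : ∀ j, ∑ i, f t j i * ((x t i).1^2 + (x t i).2^2) = 4 := by
      intro j
      have h0 := hmom0 t j
      have h1 := hmom1 t j
      have h1a : ∑ k, f t j k * ((x t k).1 - (x t j).1) = 0 := by
        have := congrArg Prod.fst h1
        simpa [Prod.fst_sum, smul_eq_mul] using this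
      have h1b : ∑ k, f t j k * ((x t k).2 - (x t j).2) = 0 := by
        have := congrArg Prod.snd h1
        simpa [Prod.snd_sum, smul_eq_mul] using this
      have h2 := hmom2 t j
      calc ∑ k, f t j k * ((x t k).1^2 + (x t k).2^2)
          = ∑ k, (f t j k * (((x t k).1 - (x t j).1)^2 + ((x t k).2 - (x t j).2)^2)
            + (2 * (x t j).1) * (f t j k * ((x t k).1 - (x t j).1))
            + (2 * (x t j).2) * (f t j k * ((x t k).2 - (x t j).2))
            + ((x t j).1^2 + (x t j).2^2) * f t j k) :=
          Finset.sum_congr rfl (fun k _ => by ring)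
        _ = 4 := by
          rw [Finset.sum_add_distrib, Finset.sum_add_distrib, Finset.sum_add_distrib,
            ← Finset.mul_sum, ← Finset.mul_sum, ← Finset.mul_sum, h2, h1a, h1b, h0]
          ring
    have hA : ∑ i, (ν * ∑ j, f t j i * Γ t j) * ((x t i).1^2 + (x t i).2^2)
        = 4 * ν * ∑ i, Γ t i := by
      calc ∑ i, (ν * ∑ j, f t j i * Γ t j) * ((x t i).1^2 + (x t i).2^2)
          = ∑ i, ∑ j, ν * Γ t j * (f t j i * ((x t i).1^2 + (x t i).2^2)) := by
            refine Finset.sum_congr rfl (fun i _ => ?_)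
            rw [Finset.mul_sum, Finset.sum_mul]
            exact Finset.sum_congr rfl (fun j _ => by ring)
        _ = ∑ j, ∑ i, ν * Γ t j * (f t j i * ((x t i).1^2 + (x t i).2^2)) :=
            Finset.sum_comm
        _ = ∑ j, ν * Γ t j * 4 := by
            refine Finset.sum_congr rfl (fun j _ => ?_)
            rw [← Finset.mul_sum, hcol j]
        _ = 4 * ν * ∑ j, Γ t j := by
            rw [Finset.mul_sum]
            exact Finset.sum_congr rfl (fun j _ => by ring)
    -- the convection part vanishes
    set g : Fin N → Fin N → ℝ := fun i j => Γ t i * Γ t j *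
      (2 * ((x t i).1 * (biotSavart (x t j - x t i)).1
        + (x t i).2 * (biotSavart (x t j - x t i)).2)) with hg
    have hBg : ∑ i, Γ t i * (2 * (x t i).1 * (∑ j, Γ t j • biotSavart (x t j - x t i)).1
          + 2 * (x t i).2 * (∑ j, Γ t j • biotSavart (x t j - x t i)).2)
        = ∑ i, ∑ j, g i j := by
      refine Finset.sum_congr rfl (fun i _ => ?_)
      rw [Prod.fst_sum, Prod.snd_sum, Finset.mul_sum, Finset.mul_sum,
        ← Finset.sum_add_distrib, Finset.mul_sum]
      refine Finset.sum_congr rfl (fun j _ => ?_)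
      simp only [hg, Prod.smul_fst, Prod.smul_snd, smul_eq_mul]
      ring
    have hanti : ∀ i j, g i j + g j i = 0 := by
      intro i j
      simp only [hg]
      linear_combination (Γ t i * Γ t j * 2) * bs_key (x t i) (x t j)
    have hS : (∑ i, ∑ j, g i j) + (∑ i, ∑ j, g i j) = 0 := by
      nth_rewrite 2 [Finset.sum_comm]
      rw [← Finset.sum_add_distrib]
      rw [show (fun i => (∑ j, g i j) + ∑ j, g j i) = fun i => ∑ j, (g i j + g j i) from
        funext fun i => (Finset.sum_add_distrib).symm]
      simp [hanti]
    have hB : ∑ i, Γ t i * (2 * (x t i).1 * (∑ j, Γ t j • biotSavart (x t j - x t i)).1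
          + 2 * (x t i).2 * (∑ j, Γ t j • biotSavart (x t j - x t i)).2) = 0 := by
      rw [hBg]; linarith
    rw [hA, hB, add_zero]
  rw [hEq] at H
  exact H
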